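/- Let n = 8 f_m + 2 with m ≥ 1, s a positive integer, and A : {0,...,n} → ℝ with A_i ≥ 0, A_0 = 1, ∑_i A_i = 2^s, satisfying A_1 = ⟨3n - 4x⟩ and A_2 = (1/2)⟨(4x - 3n + 1)² - 3n - 1⟩. Then 2^s > 3n + 2, i.e., s ≥ 2m + 4. -/

import Mathlib

def f (m : ℕ) : ℕ := (4 ^ m - 1) / 3

theorem lp_bound_8fm_add_two (m : ℕ) (hm : 1 ≤ m) (n : ℕ)
    (hn : n = 8 * f m + 2)
    (s : ℕ) (hs : 1 ≤ s) (A : ℕ → ℝ)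
    (hA0 : A 0 = 1)
    (hApos : ∀ i ≤ n, 0 ≤ A i)
    (hAsum : ∑ i ∈ Finset.range (n + 1), A i = 2 ^ s)
    (hA1 : A 1 = (1 / 2 ^ s) * ∑ i ∈ Finset.range (n + 1), (3 * n - 4 * i : ℝ) * A i)
    (hA2 : A 2 = (1 / 2 ^ s) * ∑ i ∈ Finset.range (n + 1),
      (1 / 2) * ((4 * i - 3 * n + 1 : ℝ) ^ 2 - 3 * n - 1) * A i) :
    (2 : ℝ) ^ s > 3 * n + 2 ∧ 2 * m + 4 ≤ s := by
  -- arithmetic facts about f and n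
  have h4m : 4 ≤ 4 ^ m := by
    calc 4 = 4 ^ 1 := by norm_num
    _ ≤ 4 ^ m := Nat.pow_le_pow_right (by norm_num) hm
  have h3div : 3 ∣ 4 ^ m - 1 := by
    have : 4 ^ m % 3 = 1 := by
      rw [Nat.pow_mod]; norm_num
    omega
  have h3f : 3 * f m = 4 ^ m - 1 := Nat.mul_div_cancel' h3div
  have hn10 : 10 ≤ n := by omega
  have hns : 3 * n + 2 = 8 * 4 ^ m := by omega
  have hxpos : (0:ℝ) < 2 ^ s := by positivity
  have hxne : (2:ℝ) ^ s ≠ 0 := ne_of_gt hxpos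
  have hN : (10:ℝ) ≤ (n:ℝ) := by exact_mod_cast hn10
  -- g(i) ≥ 0 for natural i
  have hg : ∀ i : ℕ, (0:ℝ) ≤ (4 * i - 3 * n : ℝ) ^ 2 - 4 := by
    intro i
    have hz : (4:ℤ) ≤ (4 * i - 3 * n : ℤ) ^ 2 := by
      have hk : (4 * i - 3 * n : ℤ) % 4 = 2 ∨ (4 * i - 3 * n : ℤ) % 4 = -2 := by
        have : (n:ℤ) = 8 * f m + 2 := by exact_mod_cast hn
        omega
      have : (4 * i - 3 * n : ℤ) ≥ 2 ∨ (4 * i - 3 * n : ℤ) ≤ -2 := by omega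
      rcases this with h | h <;> nlinarith
    have : (4:ℝ) ≤ ((4 * i - 3 * n : ℤ) : ℝ) ^ 2 := by exact_mod_cast hz
    push_cast at this
    linarith
  -- the sums from hA1, hA2
  have e1 : ∑ i ∈ Finset.range (n + 1), (3 * n - 4 * i : ℝ) * A i = 2 ^ s * A 1 := by
    rw [hA1]; field_simp
  have e2 : ∑ i ∈ Finset.range (n + 1),
      (1 / 2) * ((4 * i - 3 * n + 1 : ℝ) ^ 2 - 3 * n - 1) * A i = 2 ^ s * A 2 := by
    rw [hA2]; field_simp
  -- key identity: ∑ g(i) A i = 2^s (2 A1 + 2 A2 + 3n - 4)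
  have key : ∑ i ∈ Finset.range (n + 1), ((4 * i - 3 * n : ℝ) ^ 2 - 4) * A i
      = 2 ^ s * (2 * A 1 + 2 * A 2 + (3 * n - 4)) := by
    have expand : ∀ i ∈ Finset.range (n + 1),
        ((4 * i - 3 * n : ℝ) ^ 2 - 4) * A i
        = 2 * ((1 / 2) * ((4 * i - 3 * n + 1 : ℝ) ^ 2 - 3 * n - 1) * A i)
          + 2 * ((3 * n - 4 * i : ℝ) * A i) + (3 * n - 4 : ℝ) * A i := by
      intro i _; ring
    rw [Finset.sum_congr rfl expand, Finset.sum_add_distrib, Finset.sum_add_distrib,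
      ← Finset.mul_sum, ← Finset.mul_sum, ← Finset.mul_sum, e1, e2, hAsum]
    ring
  -- lower bound by the first three terms
  have hsub : Finset.range 3 ⊆ Finset.range (n + 1) := by
    apply Finset.range_subset_range.mpr; omega
  have hlow : ∑ i ∈ Finset.range 3, ((4 * i - 3 * n : ℝ) ^ 2 - 4) * A i
      ≤ ∑ i ∈ Finset.range (n + 1), ((4 * i - 3 * n : ℝ) ^ 2 - 4) * A i := by
    apply Finset.sum_le_sum_of_subset_of_nonneg hsub
    intro i hi _
    exact mul_nonneg (hg i) (hApos i (by simpa [Nat.lt_succ_iff] using Finset.mem_range.mp hi))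
  rw [key] at hlow
  simp only [Finset.sum_range_succ, Finset.sum_range_zero] at hlow
  rw [hA0] at hlow
  push_cast at hlow
  have ha : 0 ≤ A 1 := hApos 1 (by omega)
  have hb : 0 ≤ A 2 := hApos 2 (by omega)
  -- first conclusion
  have h1 : (2:ℝ) ^ s > 3 * n + 2 := by
    by_contra hcon
    push_neg at hcon
    have p1 : 0 ≤ A 1 * (9 * (n:ℝ)^2 - 24 * n + 12 - 2 * 2 ^ s) := by
      apply mul_nonneg ha; nlinarith
    have p2 : 0 ≤ A 2 * (9 * (n:ℝ)^2 - 48 * n + 60 - 2 * 2 ^ s) := by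
      apply mul_nonneg hb; nlinarith
    have p3 : (2:ℝ) ^ s * (3 * n - 4) ≤ (3 * n + 2) * (3 * n - 4) :=
      mul_le_mul_of_nonneg_right hcon (by linarith)
    nlinarith [hlow, p1, p2, p3]
  refine ⟨h1, ?_⟩
  -- second conclusion
  have hpow : (3 * n + 2 : ℝ) = 2 ^ (2 * m + 3) := by
    have : ((3 * n + 2 : ℕ) : ℝ) = ((8 * 4 ^ m : ℕ) : ℝ) := by rw [hns]
    push_cast at this
    rw [pow_add, pow_mul]
    norm_num
    linarith [this]
  rw [hpow] at h1
  have := (pow_lt_pow_iff_right₀ (by norm_num : (1:ℝ) < 2)).mp h1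
  omega
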